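/- Let M be a matroid of rank r on a finite ground set E and let 𝓧 be a collection of subsets of E. Then 𝓧 is complete with respect to M if and only if there is an erection N of M such that 𝓧 = { X ⊆ E : r_N(X) ≤ r }, where r_N denotes the rank function of N. -/

import Mathlib

open Matroid Set Filter Real

namespace PavingEnum

/-- The rank of a matroid: the largest cardinality of a base. -/
noncomputable def mrk {α : Type*} (M : Matroid α) : ℕ :=
  sSup {n : ℕ | ∃ B, M.IsBase B ∧ B.ncard = n}

/-- The rank of a set in a matroid: the largest cardinality of an
independent subset of the set. -/
noncomputable def mrnk {α : Type*} (M : Matroid α) (X : Set α) : ℕ :=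
  sSup {n : ℕ | ∃ I, I ⊆ X ∧ M.Indep I ∧ I.ncard = n}

/-- A circuit is a minimal dependent set. -/
def IsCircuit {α : Type*} (M : Matroid α) (C : Set α) : Prop :=
  M.Dep C ∧ ∀ D, D ⊂ C → M.Indep D

/-- A matroid of rank `r` is paving if every circuit has cardinality at least `r`. -/
def Paving {α : Type*} (M : Matroid α) : Prop :=
  ∀ C, IsCircuit M C → (mrk M : ℕ∞) ≤ C.encard

/-- A matroid is sparse paving if both it and its dual are paving. -/
def SparsePaving {α : Type*} (M : Matroid α) : Prop :=
  Paving M ∧ Paving M✶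

/-- `numMatroids n r` : the number of matroids on the ground set `{1, …, n}` of rank `r`. -/
noncomputable def numMatroids (n r : ℕ) : ℕ :=
  {M : Matroid (Fin n) | M.E = Set.univ ∧ mrk M = r}.ncard

/-- `numPaving n r` : the number of paving matroids on `{1, …, n}` of rank `r`. -/
noncomputable def numPaving (n r : ℕ) : ℕ :=
  {M : Matroid (Fin n) | M.E = Set.univ ∧ mrk M = r ∧ Paving M}.ncard

/-- `numSparsePaving n r` : the number of sparse paving matroids on `{1, …, n}` of rank `r`. -/
noncomputable def numSparsePaving (n r : ℕ) : ℕ :=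
  {M : Matroid (Fin n) | M.E = Set.univ ∧ mrk M = r ∧ SparsePaving M}.ncard

end PavingEnum

namespace PavingEnum

/-- `T` is the truncation of `N`: same ground set, and the independent sets of `T`
are exactly the independent sets of `N` of cardinality at most `rk N − 1`. -/
def IsTruncationOf {α : Type*} (T N : Matroid α) : Prop :=
  T.E = N.E ∧ ∀ I : Set α, T.Indep I ↔ (N.Indep I ∧ I.ncard + 1 ≤ mrk N)

/-- `N` is an erection of `M` if `T(N) = M` or `N = M`. -/
def IsErection {α : Type*} (N M : Matroid α) : Prop :=
  IsTruncationOf M N ∨ N = M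

/-- A set `X` is `k`-closed in `M` if it contains the closure of each of its
subsets of cardinality at most `k`. -/
def KClosed {α : Type*} (M : Matroid α) (k : ℕ) (X : Set α) : Prop :=
  ∀ Y ⊆ X, Y.encard ≤ (k : ℕ∞) → M.closure Y ⊆ X

/-- The `k`-closure of a set: the intersection of all `k`-closed sets containing it. -/
def kClosure {α : Type*} (M : Matroid α) (k : ℕ) (X : Set α) : Set α :=
  ⋂₀ {Y | KClosed M k Y ∧ X ⊆ Y}

/-- A flat `F` of `M` of rank `k` is essential if the restriction `M|F` has a
nontrivial erection, i.e. there is a matroid on ground set `F` of rank `k+1`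
whose truncation is `M|F`. -/
def IsEssentialFlat {α : Type*} (M : Matroid α) (F : Set α) : Prop :=
  M.IsFlat F ∧ ∃ N : Matroid α, N.E = F ∧ mrk N = mrnk M F + 1 ∧ IsTruncationOf (M ↾ F) N

end PavingEnum

open PavingEnum

/-- A collection 𝓧 of subsets of the ground set of `M` is complete with respect to `M`:
(i) 𝓧 is closed under taking subsets, (ii) every basis of `M` is in 𝓧, (iii) 𝓧 is
closed under the (r−1)-closure, and (iv) X ∪ Y ∈ 𝓧 whenever X, Y ∈ 𝓧 and
r_M(X ∩ Y) = r, where r is the rank of `M`. -/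
def CompleteWithRespectTo {α : Type*} (M : Matroid α) (𝓧 : Set (Set α)) : Prop :=
  (∀ X ∈ 𝓧, ∀ Y ⊆ X, Y ∈ 𝓧) ∧
  (∀ B : Set α, M.IsBase B → B ∈ 𝓧) ∧
  (∀ X ∈ 𝓧, kClosure M (mrk M - 1) X ∈ 𝓧) ∧
  (∀ X ∈ 𝓧, ∀ Y ∈ 𝓧, mrnk M (X ∩ Y) = mrk M → X ∪ Y ∈ 𝓧)

set_option linter.dupNamespace false
section
namespace PavingEnum

section Helpers

variable {α : Type*} {M N : Matroid α} {X Y I J B S : Set α} {k n : ℕ}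

lemma le_mrnk (hE : M.E.Finite) (hIX : I ⊆ X) (hI : M.Indep I) : I.ncard ≤ mrnk M X := by
  have hbdd : BddAbove {n : ℕ | ∃ I, I ⊆ X ∧ M.Indep I ∧ I.ncard = n} := by
    refine ⟨M.E.ncard, ?_⟩
    rintro n ⟨I', -, hI', rfl⟩
    exact ncard_le_ncard hI'.subset_ground hE
  exact le_csSup hbdd ⟨I, hIX, hI, rfl⟩

lemma mrnk_le (h : ∀ I, I ⊆ X → M.Indep I → I.ncard ≤ n) : mrnk M X ≤ n := by
  have hne : {m : ℕ | ∃ I, I ⊆ X ∧ M.Indep I ∧ I.ncard = m}.Nonempty :=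
    ⟨0, ∅, empty_subset _, M.empty_indep, ncard_empty _⟩
  apply csSup_le hne
  rintro m ⟨I, hIX, hI, rfl⟩; exact h I hIX hI

lemma exists_mrnk (hE : M.E.Finite) (X : Set α) :
    ∃ I, I ⊆ X ∧ M.Indep I ∧ I.ncard = mrnk M X :=
  Nat.sSup_mem (s := {n : ℕ | ∃ I, I ⊆ X ∧ M.Indep I ∧ I.ncard = n})
    ⟨0, ∅, empty_subset _, M.empty_indep, ncard_empty _⟩
    ⟨M.E.ncard, by rintro n ⟨I', -, hI', rfl⟩; exact ncard_le_ncard hI'.subset_ground hE⟩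

lemma mrk_eq_ncard_base (hE : M.E.Finite) (hB : M.IsBase B) : mrk M = B.ncard := by
  have h : {n : ℕ | ∃ B', M.IsBase B' ∧ B'.ncard = n} = {B.ncard} := by
    ext n
    constructor
    · rintro ⟨B', hB', rfl⟩; exact hB'.ncard_eq_ncard_of_isBase hB
    · rintro rfl; exact ⟨B, hB, rfl⟩
  rw [mrk, h, csSup_singleton]

lemma indep_ncard_le_mrk (hE : M.E.Finite) (hI : M.Indep I) : I.ncard ≤ mrk M := by
  obtain ⟨B, hB, hIB⟩ := hI.exists_isBase_superset
  rw [mrk_eq_ncard_base hE hB]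
  exact ncard_le_ncard hIB (hE.subset hB.subset_ground)

lemma mrnk_le_mrk (hE : M.E.Finite) (X : Set α) : mrnk M X ≤ mrk M :=
  mrnk_le fun _ _ hI => indep_ncard_le_mrk hE hI

lemma mrnk_mono (hE : M.E.Finite) (hXY : X ⊆ Y) : mrnk M X ≤ mrnk M Y :=
  mrnk_le fun I hIX hI => le_mrnk hE (hIX.trans hXY) hI

lemma base_of_indep_ncard (hE : M.E.Finite) (hI : M.Indep I) (hcard : I.ncard = mrk M) :
    M.IsBase I := by
  obtain ⟨B, hB, hIB⟩ := hI.exists_isBase_superset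
  have h := mrk_eq_ncard_base hE hB
  rwa [eq_of_subset_of_ncard_le hIB (by omega) (hE.subset hB.subset_ground)]

lemma subset_kClosure : X ⊆ kClosure M k X :=
  fun _ hx => mem_sInter.2 fun _ hT => hT.2 hx

lemma kClosure_subset (hY : KClosed M k Y) (hXY : X ⊆ Y) : kClosure M k X ⊆ Y :=
  sInter_subset_of_mem ⟨hY, hXY⟩

lemma kClosed_kClosure : KClosed M k (kClosure M k X) := by
  intro Y hYsub hYcard e he
  rw [kClosure, mem_sInter]
  intro T hT
  exact hT.1 Y (hYsub.trans (kClosure_subset hT.1 hT.2)) hYcard he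

lemma kClosed_ground : KClosed M k M.E :=
  fun Y _ _ => M.closure_subset_ground Y

lemma kClosure_subset_ground (hX : X ⊆ M.E) : kClosure M k X ⊆ M.E :=
  kClosure_subset kClosed_ground hX

lemma closure_subset_kClosure (hYX : Y ⊆ X) (hYcard : Y.encard ≤ (k : ℕ∞)) :
    M.closure Y ⊆ kClosure M k X :=
  kClosed_kClosure Y (hYX.trans subset_kClosure) hYcard

/-- an independent set inside the closure of an independent set `I` has
at most `I.ncard` elements. -/
lemma ncard_le_of_indep_subset_closure (hE : M.E.Finite) (hI : M.Indep I)
    (hB : M.Indep B) (hBI : B ⊆ M.closure I) : B.ncard ≤ I.ncard := by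
  obtain ⟨B', hB', hBB'⟩ := hB.subset_isBasis_of_subset hBI (M.closure_subset_ground I)
  have h1 : B'.encard = I.encard := hB'.encard_eq_encard hI.isBasis_closure
  have h2 : B.ncard ≤ B'.ncard := ncard_le_ncard hBB' (hE.subset hB'.indep.subset_ground)
  rwa [ncard_def B', h1, ← ncard_def] at h2

lemma mrk_truncation (hE : M.E.Finite) (hT : IsTruncationOf M N) :
    mrk N = mrk M + 1 := by
  have hNE : N.E.Finite := hT.1 ▸ hE
  obtain ⟨B, hB⟩ := M.exists_isBase
  have h1 : B.ncard + 1 ≤ mrk N := ((hT.2 B).1 hB.indep).2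
  have hBcard : mrk M = B.ncard := mrk_eq_ncard_base hE hB
  obtain ⟨B', hB'⟩ := N.exists_isBase
  have hB'card : mrk N = B'.ncard := mrk_eq_ncard_base hNE hB'
  rcases le_or_gt (mrk N) (mrk M + 1) with h | h
  · omega
  · exfalso
    obtain ⟨S, hSB', hScard⟩ := exists_subset_card_eq (n := mrk M + 1) (s := B') (by omega)
    have hSind : N.Indep S := hB'.indep.subset hSB'
    have hMS : M.Indep S := (hT.2 S).2 ⟨hSind, by omega⟩
    have := indep_ncard_le_mrk hE hMS
    omega

lemma trunc_indep_iff (hE : M.E.Finite) (hT : IsTruncationOf M N) :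
    M.Indep I ↔ (N.Indep I ∧ I.ncard ≤ mrk M) := by
  rw [hT.2 I, mrk_truncation hE hT]
  exact ⟨fun ⟨h1, h2⟩ => ⟨h1, by omega⟩, fun ⟨h1, h2⟩ => ⟨h1, by omega⟩⟩

/-- In a truncation, the closure of a small set in the truncated matroid is contained
in its closure in the original matroid. -/
lemma trunc_closure_subset (hE : M.E.Finite) (hT : IsTruncationOf M N)
    (hr : 1 ≤ mrk M) (hY : Y ⊆ N.E) (hYcard : Y.encard ≤ ((mrk M - 1 : ℕ) : ℕ∞)) :
    M.closure Y ⊆ N.closure Y := by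
  have hNE : N.E.Finite := hT.1 ▸ hE
  have hYfin : Y.Finite := hNE.subset hY
  have hYn : Y.ncard ≤ mrk M - 1 := by
    rw [← Nat.cast_le (α := ℕ∞), hYfin.cast_ncard_eq]; exact hYcard
  obtain ⟨I, hI⟩ := N.exists_isBasis Y hY
  have hIY : I ⊆ Y := hI.subset
  have hNI : N.Indep I := hI.indep
  have hIn : I.ncard ≤ mrk M - 1 := (ncard_le_ncard hIY hYfin).trans hYn
  have hMI : M.Indep I := (trunc_indep_iff hE hT).2 ⟨hNI, by omega⟩
  have hYclI : Y ⊆ M.closure I := by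
    intro e he
    by_cases heI : e ∈ I
    · exact M.subset_closure I hMI.subset_ground heI
    · have heN : e ∈ N.closure I := hI.subset_closure he
      have hdepN : N.Dep (insert e I) := by
        rcases (hNI.mem_closure_iff).1 heN with h | h
        · exact h
        · exact absurd h heI
      refine (hMI.mem_closure_iff).2 (Or.inl ?_)
      rw [dep_iff]
      refine ⟨fun hind => hdepN.not_indep ((trunc_indep_iff hE hT).1 hind).1, ?_⟩
      exact insert_subset (hT.1 ▸ hY he) hMI.subset_ground
  have hMbasis : M.IsBasis I Y := hMI.isBasis_of_subset_of_subset_closure hIY hYclI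
  have h1 : M.closure Y = M.closure I := (hMbasis.closure_eq_closure).symm
  have h2 : M.closure I ⊆ N.closure I := by
    intro e he
    have heE : e ∈ M.E := M.mem_ground_of_mem_closure he
    by_cases heI : e ∈ I
    · exact N.subset_closure I hNI.subset_ground heI
    · have hdepM : M.Dep (insert e I) := by
        rcases (hMI.mem_closure_iff).1 he with h | h
        · exact h
        · exact absurd h heI
      refine (hNI.mem_closure_iff).2 (Or.inl ?_)
      rw [dep_iff]
      refine ⟨fun hind => ?_, insert_subset (hT.1.symm ▸ heE) hNI.subset_ground⟩
      have hcard : (insert e I).ncard ≤ mrk M := by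
        rw [ncard_insert_of_notMem heI (hNE.subset hNI.subset_ground)]
        omega
      exact hdepM.not_indep ((trunc_indep_iff hE hT).2 ⟨hind, hcard⟩)
  rw [h1]
  exact h2.trans (N.closure_subset_closure hIY)

end Helpers

section Key

variable {α : Type*} {M : Matroid α} {𝓧 : Set (Set α)} {I J : Set α}

/-- Crapo's key augmentation lemma: if `I` is a basis of `M` and `J ∉ 𝓧`, then there
is `e ∈ J \ I` such that `insert e I ∉ 𝓧` and `e` is outside the `(r-1)`-closure of `I`. -/
lemma key_lemma (hE : M.E.Finite)
    (hdown : ∀ X ∈ 𝓧, ∀ Y ⊆ X, Y ∈ 𝓧)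
    (hkcl : ∀ X ∈ 𝓧, kClosure M (mrk M - 1) X ∈ 𝓧)
    (hunion : ∀ X ∈ 𝓧, ∀ Y ∈ 𝓧, mrnk M (X ∩ Y) = mrk M → X ∪ Y ∈ 𝓧)
    (hI : M.IsBase I) (hImem : I ∈ 𝓧) (hJE : J ⊆ M.E) (hJ : J ∉ 𝓧) :
    ∃ e ∈ J \ I, insert e I ∉ 𝓧 ∧ e ∉ kClosure M (mrk M - 1) I := by
  by_contra hcon
  push_neg at hcon
  set Z := kClosure M (mrk M - 1) I with hZdef
  have hZX : Z ∈ 𝓧 := hkcl I hImem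
  have hIZ : I ⊆ Z := subset_kClosure
  have hIcard : I.ncard = mrk M := (mrk_eq_ncard_base hE hI).symm
  have hAfin : ∀ A : Set α, A.Finite → (∀ e ∈ A, insert e I ∈ 𝓧) → Z ∪ A ∈ 𝓧 := by
    intro A hA
    refine Set.Finite.induction_on (motive := fun A _ => (∀ e ∈ A, insert e I ∈ 𝓧) → Z ∪ A ∈ 𝓧) A hA
      (fun _ => by simpa using hZX) ?_
    intro a s hans hsfin ih hmem
    · skip
      have h1 : Z ∪ s ∈ 𝓧 := ih fun e he => hmem e (Or.inr he)
      have h2 : insert a I ∈ 𝓧 := hmem a (Or.inl rfl)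
      have hsubI : I ⊆ (Z ∪ s) ∩ insert a I :=
        subset_inter (hIZ.trans subset_union_left) (subset_insert a I)
      have hint : mrnk M ((Z ∪ s) ∩ insert a I) = mrk M :=
        le_antisymm (mrnk_le_mrk hE _) (hIcard ▸ le_mrnk hE hsubI hI.indep)
      have h3 := hunion _ h1 _ h2 hint
      have heq : (Z ∪ s) ∪ insert a I = Z ∪ insert a s := by
        ext x
        simp only [mem_union, mem_insert_iff]
        constructor
        · rintro ((h | h) | (rfl | h))
          · exact Or.inl h
          · exact Or.inr (Or.inr h)
          · exact Or.inr (Or.inl rfl)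
          · exact Or.inl (hIZ h)
        · rintro (h | (rfl | h))
          · exact Or.inl (Or.inl h)
          · exact Or.inr (Or.inl rfl)
          · exact Or.inl (Or.inr h)
      rwa [heq] at h3
  set A : Set α := {e | e ∈ J ∧ e ∉ I ∧ insert e I ∈ 𝓧} with hAdef
  have hAJ : A ⊆ J := fun e he => he.1
  have hZA : Z ∪ A ∈ 𝓧 := hAfin A (hE.subset (hAJ.trans hJE)) fun e he => he.2.2
  have hJsub : J ⊆ Z ∪ A := by
    intro e he
    by_cases heI : e ∈ I
    · exact Or.inl (hIZ heI)
    · by_cases hins : insert e I ∈ 𝓧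
      · exact Or.inr ⟨he, heI, hins⟩
      · exact Or.inl (hcon e ⟨he, heI⟩ hins)
  exact hJ (hdown _ hZA J hJsub)

/-- the refined form: the element `e` found gives a "candidate" (r+1)-set. -/
lemma key_lemma' (hE : M.E.Finite)
    (hdown : ∀ X ∈ 𝓧, ∀ Y ⊆ X, Y ∈ 𝓧)
    (hkcl : ∀ X ∈ 𝓧, kClosure M (mrk M - 1) X ∈ 𝓧)
    (hunion : ∀ X ∈ 𝓧, ∀ Y ∈ 𝓧, mrnk M (X ∩ Y) = mrk M → X ∪ Y ∈ 𝓧)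
    (hr : 1 ≤ mrk M)
    (hI : M.IsBase I) (hImem : I ∈ 𝓧) (hJE : J ⊆ M.E) (hJ : J ∉ 𝓧) :
    ∃ e ∈ J \ I, insert e I ⊆ M.E ∧ insert e I ∉ 𝓧 ∧
      (insert e I).ncard = mrk M + 1 ∧ ∀ f ∈ insert e I, M.Indep (insert e I \ {f}) := by
  obtain ⟨e, heJI, hins, heZ⟩ := key_lemma hE hdown hkcl hunion hI hImem hJE hJ
  have hIfin : I.Finite := hE.subset hI.subset_ground
  have hIcard : I.ncard = mrk M := (mrk_eq_ncard_base hE hI).symm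
  have heI : e ∉ I := heJI.2
  refine ⟨e, heJI, insert_subset (hJE heJI.1) hI.subset_ground, hins, ?_, ?_⟩
  · rw [ncard_insert_of_notMem heI hIfin, hIcard]
  · intro f hf
    rcases hf with rfl | hfI
    · rw [insert_diff_self_of_notMem heI]
      exact hI.indep
    · have hef : e ≠ f := fun h => heI (h ▸ hfI)
      rw [← insert_diff_singleton_comm hef]
      have hIf : M.Indep (I \ {f}) := hI.indep.subset diff_subset
      have hecl : e ∉ M.closure (I \ {f}) := by
        intro hecl
        apply heZ
        refine closure_subset_kClosure diff_subset ?_ hecl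
        rw [← (hIfin.subset diff_subset).cast_ncard_eq,
          ncard_diff_singleton_of_mem hfI, hIcard]
      rw [hIf.insert_indep_iff_of_notMem (fun h => heI h.1)]
      exact ⟨hJE heJI.1, hecl⟩

end Key

end PavingEnum
end

section
open PavingEnum
section Main

variable {α : Type*} {M N : Matroid α}

lemma complete_of_erection (hE : M.E.Finite) (hr : 1 ≤ mrk M) (hN : IsErection N M) :
    CompleteWithRespectTo M {X : Set α | X ⊆ M.E ∧ mrnk N X ≤ mrk M} := by
  rcases hN with hT | rfl
  · -- N is a proper erection, M is the truncation of N
    have hEeq : N.E = M.E := hT.1.symm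
    have hNEfin : N.E.Finite := hEeq ▸ hE
    have hrkN : mrk N = mrk M + 1 := mrk_truncation hE hT
    -- a useful bound: independent sets of N inside the N-closure of a set of 𝓧 are small
    have hcl_bound : ∀ X ⊆ M.E, mrnk N X ≤ mrk M →
        ∀ B, N.Indep B → B ⊆ N.closure X → B.ncard ≤ mrk M := by
      intro X hXE hXr B hB hBsub
      obtain ⟨I, hI⟩ := N.exists_isBasis X (hEeq ▸ hXE)
      have hIr : I.ncard ≤ mrk M := (le_mrnk hNEfin hI.subset hI.indep).trans hXr
      have hBle : B.ncard ≤ I.ncard := by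
        refine ncard_le_of_indep_subset_closure hNEfin hI.indep hB ?_
        rwa [hI.closure_eq_closure]
      omega
    refine ⟨?_, ?_, ?_, ?_⟩
    · rintro X ⟨hXE, hXr⟩ Y hYX
      exact ⟨hYX.trans hXE, (mrnk_mono hNEfin hYX).trans hXr⟩
    · intro B hB
      refine ⟨hB.subset_ground, mrnk_le fun I hIB hI => ?_⟩
      calc I.ncard ≤ B.ncard := ncard_le_ncard hIB (hE.subset hB.subset_ground)
        _ = mrk M := (mrk_eq_ncard_base hE hB).symm
    · rintro X ⟨hXE, hXr⟩
      have hXN : X ⊆ N.E := hEeq ▸ hXE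
      have hkcl : KClosed M (mrk M - 1) (N.closure X) := by
        intro Y hYsub hYcard
        have h1 : M.closure Y ⊆ N.closure Y :=
          trunc_closure_subset hE hT hr (hYsub.trans (N.closure_subset_ground X)) hYcard
        refine h1.trans ?_
        have := N.closure_subset_closure hYsub
        rwa [N.closure_closure X] at this
      have hsub : kClosure M (mrk M - 1) X ⊆ N.closure X :=
        kClosure_subset hkcl (N.subset_closure X hXN)
      refine ⟨hsub.trans ((N.closure_subset_ground X).trans hEeq.subset), ?_⟩
      exact mrnk_le fun I hIsub hI => hcl_bound X hXE hXr I hI (hIsub.trans hsub)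
    · rintro X ⟨hXE, hXr⟩ Y ⟨hYE, hYr⟩ hint
      obtain ⟨I, hIsub, hMI, hIcard⟩ := exists_mrnk hE (X ∩ Y)
      rw [hint] at hIcard
      have hNI : N.Indep I := ((trunc_indep_iff hE hT).1 hMI).1
      have hXY_cl : ∀ W : Set α, W ⊆ M.E → mrnk N W ≤ mrk M → I ⊆ W → W ⊆ N.closure I := by
        intro W hWE hWr hIW e heW
        have heN : e ∈ N.E := hEeq.symm ▸ hWE heW
        by_cases heI : e ∈ I
        · exact N.subset_closure I hNI.subset_ground heI
        · by_cases hind : N.Indep (insert e I)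
          · exfalso
            have h1 : (insert e I).ncard = mrk M + 1 := by
              rw [ncard_insert_of_notMem heI (hE.subset (hMI.subset_ground)), hIcard]
            have h2 := le_mrnk hNEfin (insert_subset heW hIW) hind
            omega
          · refine (hNI.mem_closure_iff).2 (Or.inl ?_)
            rw [dep_iff]
            exact ⟨hind, insert_subset heN hNI.subset_ground⟩
      have hXcl : X ⊆ N.closure I :=
        hXY_cl X hXE hXr (hIsub.trans inter_subset_left)
      have hYcl : Y ⊆ N.closure I :=
        hXY_cl Y hYE hYr (hIsub.trans inter_subset_right)
      refine ⟨union_subset hXE hYE, mrnk_le fun B hBsub hB => ?_⟩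
      have : B.ncard ≤ I.ncard :=
        ncard_le_of_indep_subset_closure hNEfin hNI hB
          (hBsub.trans (union_subset hXcl hYcl))
      omega
  · -- N = M : the collection is the full power set of M.E
    refine ⟨?_, ?_, ?_, ?_⟩
    · rintro X ⟨hXE, -⟩ Y hYX
      exact ⟨hYX.trans hXE, mrnk_le_mrk hE Y⟩
    · intro B hB
      exact ⟨hB.subset_ground, mrnk_le_mrk hE B⟩
    · rintro X ⟨hXE, -⟩
      exact ⟨kClosure_subset_ground hXE, mrnk_le_mrk hE _⟩
    · rintro X ⟨hXE, -⟩ Y ⟨hYE, -⟩ -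
      exact ⟨union_subset hXE hYE, mrnk_le_mrk hE _⟩

end Main

end

/-- A collection 𝓧 of subsets of E is complete with respect to M if and only if
𝓧 = { X ⊆ E : r_N(X) ≤ r } for some erection N of M. -/
theorem complete_iff_erection {α : Type*} (M : Matroid α) (r : ℕ)
    (hE : M.E.Finite) (hrk : mrk M = r) (hr : 1 ≤ r)
    (𝓧 : Set (Set α)) (h𝓧 : ∀ X ∈ 𝓧, X ⊆ M.E) :
    CompleteWithRespectTo M 𝓧 ↔
      ∃ N : Matroid α, IsErection N M ∧
        𝓧 = {X : Set α | X ⊆ M.E ∧ mrnk N X ≤ r} := by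
  subst hrk
  constructor
  · rintro ⟨hdown, hbase, hkcl, hunion⟩
    have hindep_mem : ∀ I, M.Indep I → I ∈ 𝓧 := fun I hI => by
      obtain ⟨B, hB, hIB⟩ := hI.exists_isBase_superset
      exact hdown B (hbase B hB) I hIB
    have hsmall : ∀ X, X ⊆ M.E → mrnk M X ≤ mrk M - 1 → X ∈ 𝓧 := by
      intro X hXE hXr
      obtain ⟨I0, hI0⟩ := M.exists_isBasis X hXE
      have hc : I0.ncard ≤ mrk M - 1 := (le_mrnk hE hI0.subset hI0.indep).trans hXr
      have h1 : X ⊆ kClosure M (mrk M - 1) I0 := by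
        refine hI0.subset_closure.trans (closure_subset_kClosure (subset_refl I0) ?_)
        rw [← (hE.subset hI0.indep.subset_ground).cast_ncard_eq]
        exact_mod_cast hc
      exact hdown _ (hkcl I0 (hindep_mem I0 hI0.indep)) X h1
    by_cases hall : ∀ X ⊆ M.E, X ∈ 𝓧
    · refine ⟨M, Or.inr rfl, ?_⟩
      ext X
      simp only [mem_setOf_eq]
      exact ⟨fun hX => ⟨h𝓧 X hX, mrnk_le_mrk hE X⟩, fun h => hall X h.1⟩
    · push_neg at hall
      obtain ⟨J0, hJ0E, hJ0⟩ := hall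
      set NI : Set α → Prop := fun T => M.Indep T ∨
        (T ⊆ M.E ∧ T ∉ 𝓧 ∧ T.ncard = mrk M + 1 ∧ ∀ f ∈ T, M.Indep (T \ {f}))
        with hNIdef
      have hempty : NI ∅ := Or.inl M.empty_indep
      have hsubset : ∀ ⦃I J : Set α⦄, NI J → I ⊆ J → NI I := by
        rintro I J (hJ | ⟨hJE, hJX, hJc, hJs⟩) hIJ
        · exact Or.inl (hJ.subset hIJ)
        · by_cases heq : I = J
          · rw [heq]; exact Or.inr ⟨hJE, hJX, hJc, hJs⟩
          · have hns : ¬ J ⊆ I := fun h => heq (hIJ.antisymm h)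
            obtain ⟨f, hfJ, hfI⟩ := not_subset.1 hns
            refine Or.inl ((hJs f hfJ).subset fun x hx => ?_)
            exact ⟨hIJ hx, fun h => hfI (mem_singleton_iff.1 h ▸ hx)⟩
      have hground : ∀ ⦃I⦄, NI I → I ⊆ M.E := by
        rintro I (h | h); exacts [h.subset_ground, h.1]
      have haug : ∀ ⦃I J : Set α⦄, NI I → NI J → I.ncard < J.ncard →
          ∃ e ∈ J, e ∉ I ∧ NI (insert e I) := by
        rintro I J hI hJ hlt
        rcases hJ with hJM | ⟨hJE, hJX, hJc, hJs⟩
        · rcases hI with hIM | ⟨hIE, hIX, hIc, hIs⟩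
          · obtain ⟨e, he, hind⟩ := hIM.augment hJM (by
              rw [← (hE.subset hIM.subset_ground).cast_ncard_eq,
                ← (hE.subset hJM.subset_ground).cast_ncard_eq]
              exact_mod_cast hlt)
            exact ⟨e, he.1, he.2, Or.inl hind⟩
          · have := indep_ncard_le_mrk hE hJM; omega
        · rcases hI with hIM | ⟨hIE, hIX, hIc, hIs⟩
          · have hIr : I.ncard ≤ mrk M := indep_ncard_le_mrk hE hIM
            have hJfin : J.Finite := hE.subset hJE
            by_cases hIlt : I.ncard < mrk M
            · obtain ⟨f, hf⟩ := nonempty_of_ncard_ne_zero (s := J) (by omega)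
              have hK : M.Indep (J \ {f}) := hJs f hf
              have hKcard : (J \ {f}).ncard = mrk M := by
                rw [ncard_diff_singleton_of_mem hf, hJc]
                omega
              obtain ⟨e, he, hind⟩ := hIM.augment hK (by
                rw [← (hE.subset hIM.subset_ground).cast_ncard_eq,
                  ← (hJfin.diff (t := {f})).cast_ncard_eq, hKcard]
                exact_mod_cast (by omega : I.ncard < mrk M))
              exact ⟨e, he.1.1, he.2, Or.inl hind⟩
            · have hIcard : I.ncard = mrk M := by omega
              have hIbase : M.IsBase I := base_of_indep_ncard hE hIM hIcard
              obtain ⟨e, heJI, h1, h2, h3, h4⟩ :=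
                key_lemma' hE hdown hkcl hunion hr hIbase (hindep_mem I hIM) hJE hJX
              exact ⟨e, heJI.1, heJI.2, Or.inr ⟨h1, h2, h3, h4⟩⟩
          · omega
      set N : Matroid α := (IndepMatroid.ofFinite hE NI hempty hsubset haug hground).matroid
        with hNdef
      have hNind : ∀ T, N.Indep T ↔ NI T := fun T => by
        rw [hNdef, IndepMatroid.matroid_indep_iff, IndepMatroid.ofFinite_indep]
      have hNE : N.E = M.E := by rw [hNdef]; simp
      have hNfin : N.E.Finite := hNE ▸ hE
      have hbound : ∀ T, N.Indep T → T.ncard ≤ mrk M + 1 := by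
        intro T hT
        rcases (hNind T).1 hT with h | h
        · have := indep_ncard_le_mrk hE h; omega
        · omega
      obtain ⟨B0, hB0⟩ := M.exists_isBase
      obtain ⟨e0, he0, hc1, hc2, hc3, hc4⟩ :=
        key_lemma' hE hdown hkcl hunion hr hB0 (hindep_mem _ hB0.indep) hJ0E hJ0
      have hT0 : N.Indep (insert e0 B0) := (hNind _).2 (Or.inr ⟨hc1, hc2, hc3, hc4⟩)
      obtain ⟨BN, hBN, hsubBN⟩ := hT0.exists_isBase_superset
      have hBNcard : BN.ncard = mrk M + 1 :=
        le_antisymm (hbound BN hBN.indep)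
          (hc3 ▸ ncard_le_ncard hsubBN (hNfin.subset hBN.subset_ground))
      have hrkN : mrk N = mrk M + 1 := by rw [mrk_eq_ncard_base hNfin hBN, hBNcard]
      have htrunc : IsTruncationOf M N := by
        refine ⟨hNE.symm, fun I => ?_⟩
        rw [hrkN, hNind I]
        constructor
        · intro hMI
          exact ⟨Or.inl hMI, by have := indep_ncard_le_mrk hE hMI; omega⟩
        · rintro ⟨hMI | h, hcard⟩
          · exact hMI
          · omega
      refine ⟨N, Or.inl htrunc, ?_⟩
      ext X
      simp only [mem_setOf_eq]
      constructor
      · intro hX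
        refine ⟨h𝓧 X hX, mrnk_le fun I hIX hI => ?_⟩
        rcases (hNind I).1 hI with h | h
        · exact indep_ncard_le_mrk hE h
        · exact absurd (hdown X hX I hIX) h.2.1
      · rintro ⟨hXE, hXr⟩
        by_contra hXn
        have h1 : mrk M ≤ mrnk M X := by
          by_contra h
          exact hXn (hsmall X hXE (by omega))
        have h2 : mrnk M X = mrk M := le_antisymm (mrnk_le_mrk hE X) h1
        obtain ⟨I, hIX, hMI, hIcard⟩ := exists_mrnk hE X
        rw [h2] at hIcard
        have hIbase : M.IsBase I := base_of_indep_ncard hE hMI hIcard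
        obtain ⟨e, heXI, k1, k2, k3, k4⟩ :=
          key_lemma' hE hdown hkcl hunion hr hIbase (hindep_mem I hMI) hXE hXn
        have hNI : N.Indep (insert e I) := (hNind _).2 (Or.inr ⟨k1, k2, k3, k4⟩)
        have := le_mrnk hNfin (insert_subset heXI.1 hIX) hNI
        omega
  · rintro ⟨N, hN, rfl⟩
    exact complete_of_erection hE hr hN
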